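/- Let I be an index set with a distinguished element i₀ ∈ I. Let F̃ be the free group on the set I ∖ {i₀} with generators x_i, and let θ : ℤ/2 → Aut(F̃) be the homomorphism whose nontrivial value sends x_i to x_i⁻¹ for every i ∈ I ∖ {i₀}. Then the free product ∗_{i∈I} ℤ/2 of copies of ℤ/2 indexed by I is isomorphic to F̃ ⋊_θ ℤ/2; explicitly, the map sending x_i to a_i·a_{i₀} (where a_j denotes the generator of the j-th free factor) and sending the generator of the ℤ/2-factor to a_{i₀} is a group isomorphism F̃ ⋊_θ ℤ/2 → ∗_{i∈I} ℤ/2. -/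

import Mathlib

section helper
variable {G : Type*} [Monoid G]

lemma zmod2_cases : ∀ z : Multiplicative (ZMod 2), z = 1 ∨ z = Multiplicative.ofAdd 1 := by
  decide

/-- Hom from ℤ/2 determined by an element of square 1. -/
def zmod2Hom (g : G) (h : g * g = 1) : Multiplicative (ZMod 2) →* G where
  toFun z := if z.toAdd = 1 then g else 1
  map_one' := by simp
  map_mul' a b := by
    rcases zmod2_cases a with rfl | rfl <;> rcases zmod2_cases b with rfl | rfl <;>
      simp [h]

@[simp] lemma zmod2Hom_gen (g : G) (h : g * g = 1) :
    zmod2Hom g h (Multiplicative.ofAdd 1) = g := by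
  simp [zmod2Hom]

lemma zmod2_hom_ext {f g : Multiplicative (ZMod 2) →* G}
    (h : f (Multiplicative.ofAdd 1) = g (Multiplicative.ofAdd 1)) : f = g := by
  refine MonoidHom.ext fun z => ?_
  rcases zmod2_cases z with rfl | rfl <;> simp [h]

lemma zmod2_gen_sq : (Multiplicative.ofAdd (1 : ZMod 2)) * Multiplicative.ofAdd (1 : ZMod 2)
    = 1 := by decide

end helper

/-- The generator `a_j` of the `j`-th factor in the free product `∗_{i ∈ I} ℤ/2`. -/
def freeProductGen {I : Type} (j : I) :
    Monoid.CoprodI (fun _ : I => Multiplicative (ZMod 2)) :=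
  Monoid.CoprodI.of (i := j) (Multiplicative.ofAdd (1 : ZMod 2))

lemma freeProductGen_sq {I : Type} (j : I) : freeProductGen j * freeProductGen j = 1 := by
  rw [freeProductGen, ← map_mul, zmod2_gen_sq, map_one]

lemma freeProductGen_inv {I : Type} (j : I) : (freeProductGen j)⁻¹ = freeProductGen j :=
  inv_eq_of_mul_eq_one_right (freeProductGen_sq j)

lemma sdp_gen_sq {N G : Type*} [Group N] [Group G] (φ : G →* MulAut N) (n : N) (g : G)
    (h1 : φ g n = n⁻¹) (h2 : g * g = 1) :
    (SemidirectProduct.inl n * SemidirectProduct.inr g : N ⋊[φ] G) *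
      (SemidirectProduct.inl n * SemidirectProduct.inr g) = 1 := by
  ext
  · simp [SemidirectProduct.mul_left, SemidirectProduct.mul_right, h1, h2]
  · simp [SemidirectProduct.mul_left, SemidirectProduct.mul_right, h1, h2]

/-- if `F̃` is the free group on `I \ {i₀}` and `θ : ℤ/2 → Aut(F̃)` has its
nontrivial value sending each generator `x_i` to `x_i⁻¹`, then the map sending `x_i` to
`a_i * a_{i₀}` and the generator of the `ℤ/2`-factor to `a_{i₀}` is a group isomorphism
`F̃ ⋊_θ ℤ/2 ≃ ∗_{i ∈ I} ℤ/2`. -/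
theorem stmt_1 {I : Type} (i₀ : I)
    (θ : Multiplicative (ZMod 2) →* MulAut (FreeGroup {i : I // i ≠ i₀}))
    (hθ : ∀ i : {i : I // i ≠ i₀},
      θ (Multiplicative.ofAdd (1 : ZMod 2)) (FreeGroup.of i) = (FreeGroup.of i)⁻¹) :
    ∃ e : (FreeGroup {i : I // i ≠ i₀} ⋊[θ] Multiplicative (ZMod 2)) ≃*
        Monoid.CoprodI (fun _ : I => Multiplicative (ZMod 2)),
      (∀ i : {i : I // i ≠ i₀},
        e (SemidirectProduct.inl (FreeGroup.of i)) = freeProductGen i.val * freeProductGen i₀) ∧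
      e (SemidirectProduct.inr (Multiplicative.ofAdd (1 : ZMod 2))) = freeProductGen i₀ := by
  classical
  set C := Monoid.CoprodI (fun _ : I => Multiplicative (ZMod 2)) with hC
  set P := FreeGroup {i : I // i ≠ i₀} ⋊[θ] Multiplicative (ZMod 2) with hP
  set g₀ : Multiplicative (ZMod 2) := Multiplicative.ofAdd (1 : ZMod 2) with hg₀
  -- forward
  set f₁ : FreeGroup {i : I // i ≠ i₀} →* C :=
    FreeGroup.lift (fun i => freeProductGen i.val * freeProductGen i₀) with hf₁
  set f₂ : Multiplicative (ZMod 2) →* C := zmod2Hom (freeProductGen i₀) (freeProductGen_sq i₀)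
    with hf₂
  have compat : ∀ g : Multiplicative (ZMod 2),
      f₁.comp (θ g).toMonoidHom = (MulAut.conj (f₂ g)).toMonoidHom.comp f₁ := by
    intro g
    rcases zmod2_cases g with rfl | rfl
    · ext x
      simp
    · apply FreeGroup.ext_hom
      intro i
      simp only [MonoidHom.comp_apply, MulEquiv.coe_toMonoidHom,
        (hθ i : θ (Multiplicative.ofAdd (1 : ZMod 2)) (FreeGroup.of i) = _), map_inv,
        MulAut.conj_apply, hf₁, hf₂, FreeGroup.lift_apply_of, zmod2Hom_gen]
      erw [hθ i]
      rw [map_inv, FreeGroup.lift_apply_of]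
      rw [mul_inv_rev, freeProductGen_inv, freeProductGen_inv, mul_assoc, mul_assoc,
        freeProductGen_sq, mul_one]
  set φ : P →* C := SemidirectProduct.lift f₁ f₂ compat with hφ
  -- backward
  set u : I → FreeGroup {i : I // i ≠ i₀} :=
    fun i => if h : i = i₀ then 1 else FreeGroup.of ⟨i, h⟩ with hu
  have hθu : ∀ i, θ g₀ (u i) = (u i)⁻¹ := by
    intro i
    rw [hu]
    dsimp only
    split
    · simp
    · exact hθ _
  have tsq : ∀ i : I,
      ((SemidirectProduct.inl (u i) * SemidirectProduct.inr g₀ : P)) *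
      ((SemidirectProduct.inl (u i) * SemidirectProduct.inr g₀ : P)) = 1 := fun i =>
    sdp_gen_sq θ (u i) g₀ (hθu i) zmod2_gen_sq
  set ψ : C →* P := Monoid.CoprodI.lift (fun i =>
    zmod2Hom (SemidirectProduct.inl (u i) * SemidirectProduct.inr g₀) (tsq i)) with hψ
  have hψgen : ∀ i : I, ψ (freeProductGen i) =
      SemidirectProduct.inl (u i) * SemidirectProduct.inr g₀ := by
    intro i
    rw [hψ, freeProductGen, Monoid.CoprodI.lift_of, zmod2Hom_gen]
  have hφinl : ∀ i : {i : I // i ≠ i₀}, φ (SemidirectProduct.inl (FreeGroup.of i)) =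
      freeProductGen i.val * freeProductGen i₀ := by
    intro i
    rw [hφ, SemidirectProduct.lift_inl, hf₁, FreeGroup.lift_apply_of]
  have hφinr : φ (SemidirectProduct.inr g₀) = freeProductGen i₀ := by
    rw [hφ, SemidirectProduct.lift_inr, hf₂, hg₀, zmod2Hom_gen]
  have hui₀ : u i₀ = 1 := by rw [hu]; simp
  have h1 : ψ.comp φ = MonoidHom.id P := by
    apply SemidirectProduct.hom_ext
    · apply FreeGroup.ext_hom
      rintro ⟨i, hi⟩
      simp only [MonoidHom.comp_apply, MonoidHom.id_apply]
      rw [hφinl ⟨i, hi⟩, map_mul, hψgen, hψgen, hui₀, map_one, one_mul, mul_assoc,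
        ← map_mul, hg₀, zmod2_gen_sq, map_one, mul_one, hu]
      simp only [dif_neg hi]
      rfl
    · apply zmod2_hom_ext
      simp only [MonoidHom.comp_apply, MonoidHom.id_apply]
      rw [← hg₀, hφinr, hψgen, hui₀, map_one, one_mul]
      rfl
  have h2 : φ.comp ψ = MonoidHom.id C := by
    apply Monoid.CoprodI.ext_hom
    intro i
    apply zmod2_hom_ext
    simp only [MonoidHom.comp_apply, MonoidHom.id_apply]
    have hgen : (Monoid.CoprodI.of (Multiplicative.ofAdd (1 : ZMod 2)) : C)
        = freeProductGen i := rfl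
    rw [hgen, hψgen, map_mul, hφinr]
    by_cases h : i = i₀
    · subst h
      rw [hui₀, map_one, map_one, one_mul]
      rfl
    · rw [hu]
      simp only [dif_neg h]
      rw [hφinl ⟨i, h⟩, mul_assoc, freeProductGen_sq, mul_one]
      rfl
  have hinj : Function.Injective φ := by
    intro a b hab
    have ha := DFunLike.congr_fun h1 a
    have hb := DFunLike.congr_fun h1 b
    simp only [MonoidHom.comp_apply, MonoidHom.id_apply] at ha hb
    rw [← ha, ← hb, hab]
  have hsurj : Function.Surjective φ := by
    intro c
    refine ⟨ψ c, ?_⟩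
    have := DFunLike.congr_fun h2 c
    simpa using this
  exact ⟨MulEquiv.ofBijective φ ⟨hinj, hsurj⟩, fun i => hφinl i, hφinr⟩
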